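/- Let f : R^n x N -> R^n be a discrete-time system that is contracting with rate gamma in (0,1) in a metric M(x,t) satisfying mu*I <= M(x,t) <= L*I for all x,t with mu > 0. Then f is (sqrt(L/mu), sqrt(gamma), sqrt(L/mu))-exponentially-incrementally-input-to-state-stable: for any initial conditions x_0, y_0 and any input signal u_t, the trajectories x_{t+1} = f(x_t,t) + u_t and y_{t+1} = f(y_t,t) satisfy ||x_t - y_t|| <= sqrt(L/mu) * gamma^{t/2} * ||x_0 - y_0|| + sqrt(L/mu) * sum_{k=0}^{t-1} gamma^{(t-1-k)/2} * ||u_k||. -/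

import Mathlib

local notation "⟪" x ", " y "⟫" => @inner ℝ _ _ x y
lemma key_contract (n : ℕ) (γ μ L : ℝ) (hγ0 : 0 < γ) (hμ : 0 < μ) (hL : 0 < L)
    (f : EuclideanSpace ℝ (Fin n) → ℕ → EuclideanSpace ℝ (Fin n))
    (M : EuclideanSpace ℝ (Fin n) → ℕ →
      (EuclideanSpace ℝ (Fin n) →L[ℝ] EuclideanSpace ℝ (Fin n)))
    (hdiff : ∀ t, Differentiable ℝ (fun x => f x t))
    (hlow : ∀ x t v, μ * ‖v‖ ^ 2 ≤ ⟪v, (M x t) v⟫)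
    (hupp : ∀ x t v, ⟪v, (M x t) v⟫ ≤ L * ‖v‖ ^ 2)
    (hcontr : ∀ x t v,
      ⟪(fderiv ℝ (fun z => f z t) x) v,
          (M (f x t) (t + 1)) ((fderiv ℝ (fun z => f z t) x) v)⟫ ≤ γ * ⟪v, (M x t) v⟫)
    (a b : ℕ → EuclideanSpace ℝ (Fin n)) (t₀ : ℕ)
    (ha : ∀ τ, a (t₀ + τ + 1) = f (a (t₀ + τ)) (t₀ + τ))
    (hb : ∀ τ, b (t₀ + τ + 1) = f (b (t₀ + τ)) (t₀ + τ)) :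
    ∀ m, ‖a (t₀ + m) - b (t₀ + m)‖ ≤
      Real.sqrt (L / μ) * Real.sqrt γ ^ m * ‖a t₀ - b t₀‖ := by
  intro m
  -- interpolated trajectories
  set Z : ℝ → ℕ → EuclideanSpace ℝ (Fin n) := fun s =>
    Nat.rec (b t₀ + s • (a t₀ - b t₀)) (fun k z => f z (t₀ + k)) with hZ
  -- variational trajectories
  set V : ℝ → ℕ → EuclideanSpace ℝ (Fin n) := fun s =>
    Nat.rec (a t₀ - b t₀) (fun k v => (fderiv ℝ (fun z => f z (t₀ + k)) (Z s k)) v) with hV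
  have hZ1 : ∀ k, Z 1 k = a (t₀ + k) := by
    intro k; induction k with
    | zero => simp [hZ]
    | succ k ih => show f (Z 1 k) (t₀ + k) = a (t₀ + (k + 1)); rw [ih]; exact (ha k).symm
  have hZ0 : ∀ k, Z 0 k = b (t₀ + k) := by
    intro k; induction k with
    | zero => simp [hZ]
    | succ k ih => show f (Z 0 k) (t₀ + k) = b (t₀ + (k + 1)); rw [ih]; exact (hb k).symm
  have hder : ∀ k s, HasDerivAt (fun s => Z s k) (V s k) s := by
    intro k
    induction k with
    | zero =>
      intro s
      show HasDerivAt (fun s => b t₀ + s • (a t₀ - b t₀)) (a t₀ - b t₀) s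
      simpa using ((hasDerivAt_id s).smul_const (a t₀ - b t₀)).const_add (b t₀)
    | succ k ih =>
      intro s
      have hf := ((hdiff (t₀ + k)) (Z s k)).hasFDerivAt
      exact (hf.comp_hasDerivAt s (ih s) : _)
  -- energy bound
  have hW : ∀ s k, Real.sqrt ⟪V s k, (M (Z s k) (t₀ + k)) (V s k)⟫ ≤
      Real.sqrt γ ^ k * (Real.sqrt L * ‖a t₀ - b t₀‖) := by
    intro s k
    induction k with
    | zero =>
      have h1 : ⟪V s 0, (M (Z s 0) t₀) (V s 0)⟫ ≤ L * ‖a t₀ - b t₀‖ ^ 2 := hupp _ _ _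
      calc Real.sqrt ⟪V s 0, (M (Z s 0) t₀) (V s 0)⟫
          ≤ Real.sqrt (L * ‖a t₀ - b t₀‖ ^ 2) := Real.sqrt_le_sqrt h1
        _ = Real.sqrt L * ‖a t₀ - b t₀‖ := by
            rw [Real.sqrt_mul hL.le, Real.sqrt_sq (norm_nonneg _)]
        _ = Real.sqrt γ ^ 0 * (Real.sqrt L * ‖a t₀ - b t₀‖) := by ring
    | succ k ih =>
      have hc : ⟪V s (k+1), (M (Z s (k+1)) (t₀ + (k+1))) (V s (k+1))⟫ ≤
          γ * ⟪V s k, (M (Z s k) (t₀ + k)) (V s k)⟫ := by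
        have := hcontr (Z s k) (t₀ + k) (V s k)
        have hz : Z s (k+1) = f (Z s k) (t₀ + k) := rfl
        have hv : V s (k+1) = (fderiv ℝ (fun z => f z (t₀ + k)) (Z s k)) (V s k) := rfl
        rw [hz, hv, show t₀ + (k+1) = t₀ + k + 1 from rfl]
        exact this
      calc Real.sqrt ⟪V s (k+1), (M (Z s (k+1)) (t₀ + (k+1))) (V s (k+1))⟫
          ≤ Real.sqrt (γ * ⟪V s k, (M (Z s k) (t₀ + k)) (V s k)⟫) := Real.sqrt_le_sqrt hc
        _ = Real.sqrt γ * Real.sqrt ⟪V s k, (M (Z s k) (t₀ + k)) (V s k)⟫ :=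
            Real.sqrt_mul hγ0.le _
        _ ≤ Real.sqrt γ * (Real.sqrt γ ^ k * (Real.sqrt L * ‖a t₀ - b t₀‖)) :=
            mul_le_mul_of_nonneg_left ih (Real.sqrt_nonneg _)
        _ = Real.sqrt γ ^ (k+1) * (Real.sqrt L * ‖a t₀ - b t₀‖) := by ring
  -- norm bound on V
  have hVb : ∀ s, ‖V s m‖ ≤ Real.sqrt (L / μ) * Real.sqrt γ ^ m * ‖a t₀ - b t₀‖ := by
    intro s
    have h1 : μ * ‖V s m‖ ^ 2 ≤ ⟪V s m, (M (Z s m) (t₀ + m)) (V s m)⟫ := hlow _ _ _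
    have h2 : Real.sqrt μ * ‖V s m‖ ≤ Real.sqrt ⟪V s m, (M (Z s m) (t₀ + m)) (V s m)⟫ := by
      calc Real.sqrt μ * ‖V s m‖ = Real.sqrt (μ * ‖V s m‖ ^ 2) := by
            rw [Real.sqrt_mul hμ.le, Real.sqrt_sq (norm_nonneg _)]
        _ ≤ _ := Real.sqrt_le_sqrt h1
    have h3 : Real.sqrt μ * ‖V s m‖ ≤ Real.sqrt γ ^ m * (Real.sqrt L * ‖a t₀ - b t₀‖) :=
      h2.trans (hW s m)
    have hsμ : 0 < Real.sqrt μ := Real.sqrt_pos.mpr hμ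
    rw [show Real.sqrt (L / μ) = Real.sqrt L / Real.sqrt μ from Real.sqrt_div hL.le μ]
    rw [div_mul_eq_mul_div, div_mul_eq_mul_div, le_div_iff₀ hsμ]
    nlinarith [Real.sqrt_nonneg γ]
  -- mean value inequality on [0,1]
  have hmv := norm_image_sub_le_of_norm_deriv_le_segment_01'
    (f := fun s => Z s m) (f' := fun s => V s m)
    (fun s _ => (hder m s).hasDerivWithinAt)
    (fun s _ => hVb s)
  rw [hZ1 m, hZ0 m] at hmv
  exact hmv
theorem stmt4 (n : ℕ) (γ μ L : ℝ) (hγ0 : 0 < γ) (hγ1 : γ < 1) (hμ : 0 < μ) (hL : 0 < L)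
    (f : EuclideanSpace ℝ (Fin n) → ℕ → EuclideanSpace ℝ (Fin n))
    (M : EuclideanSpace ℝ (Fin n) → ℕ →
      (EuclideanSpace ℝ (Fin n) →L[ℝ] EuclideanSpace ℝ (Fin n)))
    (hdiff : ∀ t, Differentiable ℝ (fun x => f x t))
    (hlow : ∀ x t v, μ * ‖v‖ ^ 2 ≤ ⟪v, (M x t) v⟫)
    (hupp : ∀ x t v, ⟪v, (M x t) v⟫ ≤ L * ‖v‖ ^ 2)
    (hcontr : ∀ x t v,
      ⟪(fderiv ℝ (fun z => f z t) x) v,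
          (M (f x t) (t + 1)) ((fderiv ℝ (fun z => f z t) x) v)⟫ ≤ γ * ⟪v, (M x t) v⟫)
    (x y u : ℕ → EuclideanSpace ℝ (Fin n))
    (hx : ∀ t, x (t + 1) = f (x t) t + u t)
    (hy : ∀ t, y (t + 1) = f (y t) t) :
    ∀ t, ‖x t - y t‖ ≤
      Real.sqrt (L / μ) * Real.sqrt γ ^ t * ‖x 0 - y 0‖ +
        Real.sqrt (L / μ) * ∑ k ∈ Finset.range t, Real.sqrt γ ^ (t - 1 - k) * ‖u k‖ := by
  intro t
  -- intermediate trajectories: ξ k follows x up to time k, then runs input-free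
  set ξ : ℕ → ℕ → EuclideanSpace ℝ (Fin n) := fun k =>
    Nat.rec (x 0) (fun τ z => if τ + 1 ≤ k then x (τ + 1) else f z τ) with hξ
  have hξle : ∀ k τ, τ ≤ k → ξ k τ = x τ := by
    intro k τ
    induction τ with
    | zero => intro _; rfl
    | succ τ ih =>
      intro h
      show (if τ + 1 ≤ k then x (τ + 1) else f (ξ k τ) τ) = x (τ + 1)
      rw [if_pos h]
  have hξstep : ∀ k τ, k ≤ τ → ξ k (τ + 1) = f (ξ k τ) τ := by
    intro k τ h
    show (if τ + 1 ≤ k then x (τ + 1) else f (ξ k τ) τ) = f (ξ k τ) τ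
    rw [if_neg (by omega)]
  -- initial-condition term
  have h0 : ‖ξ 0 t - y t‖ ≤ Real.sqrt (L / μ) * Real.sqrt γ ^ t * ‖x 0 - y 0‖ := by
    have := key_contract n γ μ L hγ0 hμ hL f M hdiff hlow hupp hcontr (ξ 0) y 0
      (fun τ => by simpa using hξstep 0 τ (Nat.zero_le τ))
      (fun τ => by simpa using hy τ) t
    simpa [hξle 0 0 le_rfl] using this
  -- input terms
  have hk : ∀ k, k < t →
      ‖ξ (k + 1) t - ξ k t‖ ≤ Real.sqrt (L / μ) * Real.sqrt γ ^ (t - 1 - k) * ‖u k‖ := by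
    intro k hkt
    have hm : (k + 1) + (t - 1 - k) = t := by omega
    have := key_contract n γ μ L hγ0 hμ hL f M hdiff hlow hupp hcontr
      (ξ (k + 1)) (ξ k) (k + 1)
      (fun τ => hξstep (k + 1) (k + 1 + τ) (Nat.le_add_right _ _))
      (fun τ => hξstep k (k + 1 + τ) (by omega)) (t - 1 - k)
    rw [hm] at this
    have hd : ξ (k + 1) (k + 1) - ξ k (k + 1) = u k := by
      rw [hξle (k + 1) (k + 1) le_rfl, hx k, hξstep k k le_rfl, hξle k k le_rfl]
      exact add_sub_cancel_left _ _
    rwa [hd] at this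
  -- telescoping
  have htel : x t - y t = (∑ k ∈ Finset.range t, (ξ (k + 1) t - ξ k t)) + (ξ 0 t - y t) := by
    rw [Finset.sum_range_sub (f := fun k => ξ k t), hξle t t le_rfl]
    abel
  calc ‖x t - y t‖
      ≤ (∑ k ∈ Finset.range t, ‖ξ (k + 1) t - ξ k t‖) + ‖ξ 0 t - y t‖ := by
        rw [htel]
        exact (norm_add_le _ _).trans (by gcongr; exact norm_sum_le _ _)
    _ ≤ (∑ k ∈ Finset.range t, Real.sqrt (L / μ) * Real.sqrt γ ^ (t - 1 - k) * ‖u k‖) +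
          Real.sqrt (L / μ) * Real.sqrt γ ^ t * ‖x 0 - y 0‖ := by
        gcongr with k hkk
        exact hk k (Finset.mem_range.mp hkk)
    _ = Real.sqrt (L / μ) * Real.sqrt γ ^ t * ‖x 0 - y 0‖ +
          Real.sqrt (L / μ) * ∑ k ∈ Finset.range t, Real.sqrt γ ^ (t - 1 - k) * ‖u k‖ := by
        rw [add_comm, Finset.mul_sum]
        congr 1
        exact Finset.sum_congr rfl fun k _ => by ring
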